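/- arXiv:1108.3494 — 4 statements merged into one kernel-verified Lean document; each statement's English description precedes it below -/
import Mathlib

section
/- For every natural number m ≥ 1, Rubinstein's function f : {0,1}^{4m²} → {0,1}, defined by f(x_{1,1},…,x_{2m,2m}) = ⋁_{i=1}^{2m} g(x_{i,1},…,x_{i,2m}) where g : {0,1}^{2m} → {0,1} satisfies g(y) = 1 iff there exists j ∈ [m] with y_{2j-1} = y_{2j} = 1 and y_k = 0 for all k ∉ {2j−1,2j}, has block sensitivity bs(f) = 2m². Consequently bs(f) = (1/2)·s(f)² for this f. -/
section Defs

variable {ι : Type} [Fintype ι] [DecidableEq ι]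

/-- `flipBit x i` is `x` with its `i`-th bit flipped. -/
def flipBit (x : ι → Bool) (i : ι) : ι → Bool :=
  Function.update x i (!x i)

/-- `flipBlock x B` is `x` with all bits indexed by `B` flipped. -/
def flipBlock (x : ι → Bool) (B : Finset ι) : ι → Bool :=
  fun j => if j ∈ B then !x j else x j

/-- The sensitivity of `f` at `x`: the number of `i` with `f (x^(i)) ≠ f x`. -/
def sensAt (f : (ι → Bool) → Bool) (x : ι → Bool) : ℕ :=
  (Finset.univ.filter fun i => f (flipBit x i) ≠ f x).card

/-- The sensitivity `s(f) = max_x s(f,x)`. -/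
def sens (f : (ι → Bool) → Bool) : ℕ :=
  Finset.univ.sup (sensAt f)

/-- The 0-sensitivity `s₀(f) = max_{x : f x = 0} s(f,x)`. -/
def sens0 (f : (ι → Bool) → Bool) : ℕ :=
  (Finset.univ.filter fun x => f x = false).sup (sensAt f)

/-- The 1-sensitivity `s₁(f) = max_{x : f x = 1} s(f,x)`. -/
def sens1 (f : (ι → Bool) → Bool) : ℕ :=
  (Finset.univ.filter fun x => f x = true).sup (sensAt f)

/-- The block sensitivity of `f` at `x`: the largest `b` such that there are
`b` pairwise disjoint blocks on which flipping `x` changes the value of `f`. -/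
noncomputable def bsAt (f : (ι → Bool) → Bool) (x : ι → Bool) : ℕ :=
  sSup {b : ℕ | ∃ Bl : Fin b → Finset ι,
    (Pairwise fun p q => Disjoint (Bl p) (Bl q)) ∧
    ∀ p, f (flipBlock x (Bl p)) ≠ f x}

/-- The block sensitivity `bs(f) = max_x bs(f,x)`. -/
noncomputable def bs (f : (ι → Bool) → Bool) : ℕ :=
  Finset.univ.sup (bsAt f)

/-- The 0-block-sensitivity `bs₀(f) = max_{x : f x = 0} bs(f,x)`. -/
noncomputable def bs0 (f : (ι → Bool) → Bool) : ℕ :=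
  (Finset.univ.filter fun x => f x = false).sup (bsAt f)

end Defs

def rubPat (m : ℕ) (j : Fin m) : Fin (2*m) → Bool :=
  fun i => decide ((i : ℕ) = 2*(j : ℕ) ∨ (i : ℕ) = 2*(j : ℕ)+1)

def posA (m : ℕ) (j : Fin m) : Fin (2*m) := ⟨2*j.val, by have := j.isLt; omega⟩
def posB (m : ℕ) (j : Fin m) : Fin (2*m) := ⟨2*j.val+1, by have := j.isLt; omega⟩

lemma rubPat_posA (m : ℕ) (j : Fin m) : rubPat m j (posA m j) = true := by
  simp [rubPat, posA]

lemma rubPat_posB (m : ℕ) (j : Fin m) : rubPat m j (posB m j) = true := by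
  simp [rubPat, posB]

lemma rubPat_posA_ne (m : ℕ) {j j' : Fin m} (h : j ≠ j') : rubPat m j' (posA m j) = false := by
  have hv : (j:ℕ) ≠ (j':ℕ) := fun h' => h (Fin.ext h')
  simp only [rubPat, posA, decide_eq_false_iff_not]
  exact decide_eq_false (by omega)

lemma rubPat_posB_ne (m : ℕ) {j j' : Fin m} (h : j ≠ j') : rubPat m j' (posB m j) = false := by
  have hv : (j:ℕ) ≠ (j':ℕ) := fun h' => h (Fin.ext h')
  simp only [rubPat, posB, decide_eq_false_iff_not]
  exact decide_eq_false (by omega)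

/-- A single flip of a pattern is never a pattern. -/
lemma flip_pat_ne_pat (m : ℕ) (j j' : Fin m) (k : Fin (2*m))
    (h : ∀ i, Function.update (rubPat m j) k (!rubPat m j k) i = rubPat m j' i) : False := by
  by_cases hjj : j = j'
  · subst hjj
    have := h k
    simp at this
  · have hag : ∀ i, i ≠ k → rubPat m j i = rubPat m j' i := by
      intro i hi
      rw [← h i, Function.update_of_ne hi]
    have hA : posA m j = k := by
      by_contra hc
      have := hag _ hc
      rw [rubPat_posA, rubPat_posA_ne m hjj] at this
      simp at this
    have hB : posB m j = k := by
      by_contra hc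
      have := hag _ hc
      rw [rubPat_posB, rubPat_posB_ne m hjj] at this
      simp at this
    have : (2*(j:ℕ) : ℕ) = 2*(j:ℕ)+1 := by
      have := congrArg Fin.val (hA.trans hB.symm)
      simpa [posA, posB] using this
    omega

/-- Two distinct single flips of the same point can't both be patterns. -/
lemma flip_flip_pat (m : ℕ) (y : Fin (2*m) → Bool) (k k' : Fin (2*m)) (hkk : k ≠ k')
    (j j' : Fin m)
    (h1 : ∀ i, Function.update y k (!y k) i = rubPat m j i)
    (h2 : ∀ i, Function.update y k' (!y k') i = rubPat m j' i) : False := by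
  by_cases hjj : j = j'
  · subst hjj
    have e1 := h1 k
    have e2 := h2 k
    rw [Function.update_self] at e1
    rw [Function.update_of_ne hkk] at e2
    rw [← e2] at e1
    simp at e1
  · have hag : ∀ i, i ≠ k → i ≠ k' → rubPat m j i = rubPat m j' i := by
      intro i hi hi'
      rw [← h1 i, ← h2 i, Function.update_of_ne hi, Function.update_of_ne hi']
    have hv : (j:ℕ) ≠ (j':ℕ) := fun h' => hjj (Fin.ext h')
    have hkv : (k:ℕ) ≠ (k':ℕ) := fun h' => hkk (Fin.ext h')
    have hA : (2*(j:ℕ) = (k:ℕ)) ∨ (2*(j:ℕ) = (k':ℕ)) := by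
      by_contra hc
      push_neg at hc
      have := hag (posA m j) (fun h => hc.1 (by simpa [posA] using congrArg Fin.val h))
        (fun h => hc.2 (by simpa [posA] using congrArg Fin.val h))
      rw [rubPat_posA, rubPat_posA_ne m hjj] at this
      simp at this
    have hB : (2*(j:ℕ)+1 = (k:ℕ)) ∨ (2*(j:ℕ)+1 = (k':ℕ)) := by
      by_contra hc
      push_neg at hc
      have := hag (posB m j) (fun h => hc.1 (by simpa [posB] using congrArg Fin.val h))
        (fun h => hc.2 (by simpa [posB] using congrArg Fin.val h))
      rw [rubPat_posB, rubPat_posB_ne m hjj] at this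
      simp at this
    have hA' : (2*(j':ℕ) = (k:ℕ)) ∨ (2*(j':ℕ) = (k':ℕ)) := by
      by_contra hc
      push_neg at hc
      have := hag (posA m j') (fun h => hc.1 (by simpa [posA] using congrArg Fin.val h))
        (fun h => hc.2 (by simpa [posA] using congrArg Fin.val h))
      rw [rubPat_posA, rubPat_posA_ne m (Ne.symm hjj)] at this
      simp at this
    have hB' : (2*(j':ℕ)+1 = (k:ℕ)) ∨ (2*(j':ℕ)+1 = (k':ℕ)) := by
      by_contra hc
      push_neg at hc
      have := hag (posB m j') (fun h => hc.1 (by simpa [posB] using congrArg Fin.val h))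
        (fun h => hc.2 (by simpa [posB] using congrArg Fin.val h))
      rw [rubPat_posB, rubPat_posB_ne m (Ne.symm hjj)] at this
      simp at this
    omega


/-- Rubinstein's function `f : {0,1}^{4m²} → {0,1}`, the OR of `2m` disjoint copies of
`g : {0,1}^{2m} → {0,1}` where `g y = 1` iff `y` is 1 exactly on some pair
`{y_{2j-1}, y_{2j}}` (`j ∈ [m]`), has block sensitivity `bs(f) = 2m²`; consequently
`bs(f) = (1/2)·s(f)²`, stated over ℕ as `2·bs(f) = s(f)²`. -/
theorem rubinstein_bs (m : ℕ) (hm : 1 ≤ m)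
    (g : (Fin (2*m) → Bool) → Bool)
    (hg : ∀ y : Fin (2*m) → Bool, g y = true ↔
      ∃ j : Fin m, ∀ i : Fin (2*m),
        y i = decide ((i : ℕ) = 2*(j : ℕ) ∨ (i : ℕ) = 2*(j : ℕ)+1))
    (f : (Fin (2*m) × Fin (2*m) → Bool) → Bool)
    (hf : ∀ x : Fin (2*m) × Fin (2*m) → Bool,
      f x = true ↔ ∃ i : Fin (2*m), g (fun j => x (i, j)) = true) :
    bs f = 2*m^2 ∧ 2 * bs f = (sens f)^2 := by
  classical
  have hfP : ∀ x : Fin (2*m) × Fin (2*m) → Bool, f x = true ↔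
      ∃ (i : Fin (2*m)) (j : Fin m), ∀ k, x (i,k) = rubPat m j k := by
    intro x
    rw [hf x]
    constructor
    · rintro ⟨i, hi⟩
      obtain ⟨j, hj⟩ := (hg _).1 hi
      exact ⟨i, j, hj⟩
    · rintro ⟨i, j, hj⟩
      exact ⟨i, (hg _).2 ⟨j, hj⟩⟩
  -- upper bound for block sensitivity at any point
  have hub : ∀ (x : Fin (2*m) × Fin (2*m) → Bool) (b : ℕ),
      (∃ Bl : Fin b → Finset (Fin (2*m) × Fin (2*m)),
        (Pairwise fun p q => Disjoint (Bl p) (Bl q)) ∧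
        ∀ p, f (flipBlock x (Bl p)) ≠ f x) → b ≤ 2*m^2 := by
    rintro x b ⟨Bl, hdisj, hflip⟩
    by_cases hx : f x = true
    · obtain ⟨i0, j0, hP⟩ := (hfP x).1 hx
      have hmeet : ∀ p, ∃ k, (i0, k) ∈ Bl p := by
        intro p
        by_contra hc
        push_neg at hc
        apply hflip p
        rw [hx]
        apply (hfP _).2
        refine ⟨i0, j0, fun k => ?_⟩
        simp only [flipBlock, if_neg (hc k)]
        exact hP k
      choose kk hkk using hmeet
      have hinj : Function.Injective kk := by
        intro p q hpq
        by_contra hne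
        exact (Finset.disjoint_left.mp (hdisj hne) (hkk p)) (hpq ▸ hkk q)
      have hcard := Fintype.card_le_of_injective kk hinj
      simp only [Fintype.card_fin] at hcard
      nlinarith
    · have hx' : f x = false := by
        cases hfx : f x
        · rfl
        · exact absurd hfx hx
      have htrue : ∀ p, f (flipBlock x (Bl p)) = true := by
        intro p
        have := hflip p
        rw [hx'] at this
        cases hfx : f (flipBlock x (Bl p))
        · exact absurd hfx this
        · rfl
      have hsel : ∀ p, ∃ (i : Fin (2*m)) (j : Fin m),
          ∀ k, flipBlock x (Bl p) (i,k) = rubPat m j k := fun p => (hfP _).1 (htrue p)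
      choose ii jj hij using hsel
      have hmem : ∀ p k, x (ii p, k) ≠ rubPat m (jj p) k → (ii p, k) ∈ Bl p := by
        intro p k hne
        by_contra hc
        have h := hij p k
        simp only [flipBlock, if_neg hc] at h
        exact hne h
      have hinj : Function.Injective (fun p => (ii p, jj p)) := by
        intro p q hpq
        by_contra hne
        simp only [Prod.mk.injEq] at hpq
        have hnr : ¬ (∀ k, x (ii p, k) = rubPat m (jj p) k) := by
          intro hk
          have : f x = true := (hfP x).2 ⟨ii p, jj p, hk⟩
          rw [hx'] at this
          exact Bool.false_ne_true this
        push_neg at hnr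
        obtain ⟨k, hk⟩ := hnr
        have h1 : (ii p, k) ∈ Bl p := hmem p k hk
        have h2 : (ii p, k) ∈ Bl q := by
          have := hmem q k (by rw [← hpq.1, ← hpq.2]; exact hk)
          rw [hpq.1]
          exact this
        exact (Finset.disjoint_left.mp (hdisj hne) h1) h2
      have hcard := Fintype.card_le_of_injective _ hinj
      simp only [Fintype.card_fin, Fintype.card_prod] at hcard
      nlinarith
  -- lower bound: witness at x0 = all zeros
  set x0 : Fin (2*m) × Fin (2*m) → Bool := fun _ => false with hx0def
  have hx0 : f x0 = false := by
    cases hfx : f x0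
    · rfl
    · obtain ⟨i, j, h⟩ := (hfP x0).1 hfx
      have := h ⟨2*(j:ℕ), by have := j.isLt; omega⟩
      simp only [hx0def, rubPat] at this
      simp at this
  have hlow : (2*m^2) ∈ {b : ℕ | ∃ Bl : Fin b → Finset (Fin (2*m) × Fin (2*m)),
      (Pairwise fun p q => Disjoint (Bl p) (Bl q)) ∧
      ∀ p, f (flipBlock x0 (Bl p)) ≠ f x0} := by
    set e : Fin (2*m^2) ≃ Fin (2*m) × Fin m :=
      (finCongr (show 2*m^2 = (2*m)*m by ring)).trans finProdFinEquiv.symm with hedef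
    refine ⟨fun p => Finset.univ.filter
      (fun q => q.1 = (e p).1 ∧ rubPat m (e p).2 q.2 = true), ?_, ?_⟩
    · intro p q hpq
      rw [Finset.disjoint_left]
      rintro ⟨a, c⟩ h1 h2
      simp only [Finset.mem_filter, Finset.mem_univ, true_and] at h1 h2
      apply hpq
      apply e.injective
      have hj : (e p).2 = (e q).2 := by
        have c1 := h1.2
        have c2 := h2.2
        simp only [rubPat, decide_eq_true_eq] at c1 c2
        apply Fin.ext
        omega
      exact Prod.ext (h1.1.symm.trans h2.1) hj
    · intro p
      rw [hx0]
      intro hcon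
      have : f (flipBlock x0 (Finset.univ.filter
          (fun q : Fin (2*m) × Fin (2*m) => q.1 = (e p).1 ∧ rubPat m (e p).2 q.2 = true))) = true := by
        apply (hfP _).2
        refine ⟨(e p).1, (e p).2, fun k => ?_⟩
        by_cases hk : rubPat m (e p).2 k = true
        · have : ((e p).1, k) ∈ (Finset.univ.filter
              (fun q : Fin (2*m) × Fin (2*m) => q.1 = (e p).1 ∧ rubPat m (e p).2 q.2 = true)) := by
            simp [hk]
          simp only [flipBlock, if_pos this, hx0def]
          simp [hk]
        · have : ((e p).1, k) ∉ (Finset.univ.filter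
              (fun q : Fin (2*m) × Fin (2*m) => q.1 = (e p).1 ∧ rubPat m (e p).2 q.2 = true)) := by
            simp [hk]
          simp only [flipBlock, if_neg this, hx0def]
          simp only [Bool.false_eq]
          cases hkk : rubPat m (e p).2 k
          · rfl
          · exact absurd hkk hk
      rw [this] at hcon
      simp at hcon
  have hbs : bs f = 2*m^2 := by
    apply le_antisymm
    · apply Finset.sup_le
      intro x _
      exact csSup_le' (fun b hb => hub x b hb)
    · refine le_trans ?_ (Finset.le_sup (Finset.mem_univ x0))
      exact le_csSup ⟨2*m^2, fun b hb => hub x0 b hb⟩ hlow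
  -- sensitivity upper bound
  have hsu : ∀ x : Fin (2*m) × Fin (2*m) → Bool, sensAt f x ≤ 2*m := by
    intro x
    unfold sensAt
    by_cases hx : f x = true
    · obtain ⟨i0, j0, hP⟩ := (hfP x).1 hx
      have hsub : (Finset.univ.filter fun q : Fin (2*m) × Fin (2*m) => f (flipBit x q) ≠ f x)
          ⊆ Finset.univ.image (fun k : Fin (2*m) => (i0, k)) := by
        rintro ⟨a, c⟩ hq
        simp only [Finset.mem_filter, Finset.mem_univ, true_and] at hq
        simp only [Finset.mem_image, Finset.mem_univ, true_and]
        refine ⟨c, ?_⟩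
        have ha : a = i0 := by
          by_contra hne
          apply hq
          rw [hx]
          apply (hfP _).2
          refine ⟨i0, j0, fun k => ?_⟩
          have : flipBit x (a,c) (i0,k) = x (i0,k) := by
            simp only [flipBit]
            exact Function.update_of_ne (fun h => hne (congrArg Prod.fst h).symm) _ _
          rw [this]
          exact hP k
        rw [ha]
      calc (Finset.univ.filter fun q : Fin (2*m) × Fin (2*m) => f (flipBit x q) ≠ f x).card
          ≤ (Finset.univ.image (fun k : Fin (2*m) => (i0, k))).card := Finset.card_le_card hsub
        _ ≤ (Finset.univ : Finset (Fin (2*m))).card := Finset.card_image_le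
        _ = 2*m := by simp
    · have hx' : f x = false := by
        cases hfx : f x
        · rfl
        · exact absurd hfx hx
      have key : ∀ q : Fin (2*m) × Fin (2*m), f (flipBit x q) ≠ f x →
          ∃ j : Fin m, ∀ k, Function.update (fun c => x (q.1, c)) q.2
            (!x (q.1, q.2)) k = rubPat m j k := by
        intro q hq
        have ht : f (flipBit x q) = true := by
          cases hfx : f (flipBit x q)
          · rw [hx'] at hq; exact absurd hfx hq
          · rfl
        obtain ⟨a, j, h⟩ := (hfP _).1 ht
        have ha : a = q.1 := by
          by_contra hne
          have : f x = true := by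
            apply (hfP x).2
            refine ⟨a, j, fun k => ?_⟩
            rw [← h k]
            simp only [flipBit]
            exact (Function.update_of_ne (fun hh => hne (congrArg Prod.fst hh)) _ _).symm
          rw [hx'] at this
          simp at this
        subst ha
        refine ⟨j, fun k => ?_⟩
        have hthis := h k
        simp only [flipBit] at hthis
        rw [← hthis]
        by_cases hc : k = q.2
        · subst hc
          rw [Function.update_self]
          have heta : Function.update x q (!x q) (q.1, q.2) = !x q := by
            have hq' : ((q.1, q.2) : Fin (2*m) × Fin (2*m)) = q := rfl
            rw [hq', Function.update_self]
          rw [heta]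
        · rw [Function.update_of_ne hc,
            Function.update_of_ne (fun hh => hc (congrArg Prod.snd hh))]
      have hinj : Set.InjOn Prod.fst
          ((Finset.univ.filter fun q : Fin (2*m) × Fin (2*m) => f (flipBit x q) ≠ f x) :
            Set (Fin (2*m) × Fin (2*m))) := by
        intro q hq q' hq' hfst
        have hq1 := (Finset.mem_filter.mp (Finset.mem_coe.mp hq)).2
        have hq1' := (Finset.mem_filter.mp (Finset.mem_coe.mp hq')).2
        obtain ⟨j, hj⟩ := key q hq1
        obtain ⟨j', hj'⟩ := key q' hq1'
        by_cases hsnd : q.2 = q'.2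
        · exact Prod.ext hfst hsnd
        · exfalso
          rw [← hfst] at hj'
          exact flip_flip_pat m (fun c => x (q.1, c)) q.2 q'.2 hsnd j j' hj hj'
      have hcard := Finset.card_le_card_of_injOn Prod.fst
        (fun q _ => Finset.mem_univ q.1) hinj
      simpa using hcard
  -- sensitivity lower bound witness
  have hi0 : 0 < 2*m := by omega
  set i0 : Fin (2*m) := ⟨0, hi0⟩ with hi0def
  set j0 : Fin m := ⟨0, hm⟩ with hj0def
  set x1 : Fin (2*m) × Fin (2*m) → Bool :=
    fun q => if q.1 = i0 then rubPat m j0 q.2 else false with hx1def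
  have hx1 : f x1 = true := (hfP _).2 ⟨i0, j0, fun k => by simp [hx1def]⟩
  have hsens1 : ∀ k : Fin (2*m), f (flipBit x1 (i0, k)) = false := by
    intro k
    cases hfx : f (flipBit x1 (i0, k))
    · rfl
    · exfalso
      obtain ⟨a, j, h⟩ := (hfP _).1 hfx
      by_cases ha : a = i0
      · subst ha
        have hrow : ∀ c, Function.update (rubPat m j0) k (!rubPat m j0 k) c = rubPat m j c := by
          intro c
          have hthis := h c
          simp only [flipBit] at hthis
          rw [← hthis]
          by_cases hc : c = k
          · subst hc
            rw [Function.update_self, Function.update_self]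
            simp [hx1def]
          · rw [Function.update_of_ne hc,
              Function.update_of_ne (fun hh => hc (congrArg Prod.snd hh))]
            simp [hx1def]
        exact flip_pat_ne_pat m j0 j k hrow
      · have hthis := h ⟨2*(j:ℕ), by have := j.isLt; omega⟩
        simp only [flipBit] at hthis
        rw [Function.update_of_ne (fun hh => ha (congrArg Prod.fst hh))] at hthis
        simp only [hx1def, if_neg ha, rubPat] at hthis
        simp at hthis
  have hsl : 2*m ≤ sensAt f x1 := by
    unfold sensAt
    have hsub : Finset.univ.image (fun k : Fin (2*m) => (i0, k))
        ⊆ (Finset.univ.filter fun q : Fin (2*m) × Fin (2*m) => f (flipBit x1 q) ≠ f x1) := by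
      intro q hq
      simp only [Finset.mem_image, Finset.mem_univ, true_and] at hq
      obtain ⟨k, rfl⟩ := hq
      simp only [Finset.mem_filter, Finset.mem_univ, true_and]
      rw [hsens1 k, hx1]
      simp
    calc 2*m = (Finset.univ.image (fun k : Fin (2*m) => (i0, k))).card := by
          rw [Finset.card_image_of_injective _ (fun a b hab => by simpa using hab)]
          simp
      _ ≤ _ := Finset.card_le_card hsub
  have hsens : sens f = 2*m :=
    le_antisymm (Finset.sup_le fun x _ => hsu x)
      (le_trans hsl (Finset.le_sup (Finset.mem_univ x1)))
  exact ⟨hbs, by rw [hbs, hsens]; ring⟩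
end

section
/- For every natural number m ≥ 1, Virza's function f : {0,1}^{(2m+1)²} → {0,1}, defined by f(x_{1,1},…,x_{2m+1,2m+1}) = ⋁_{i=1}^{2m+1} g(x_{i,1},…,x_{i,2m+1}) where g : {0,1}^{2m+1} → {0,1} satisfies g(y) = 1 iff either (there exists j ∈ [m] with y_{2j-1} = y_{2j} = 1 and y_k = 0 for all k ∉ {2j−1,2j}) or (y_{2m+1} = 1 and y_j = 0 for all j ≠ 2m+1), has sensitivity s(f) = 2m+1. -/
/-- Two accepting strings that agree outside `{j, j'}` are equal. -/
lemma acc_unique (m : ℕ) (u v : Fin (2*m+1) → Bool)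
    (hu : (∃ k : Fin m, ∀ i : Fin (2*m+1),
        u i = decide ((i : ℕ) = 2*(k : ℕ) ∨ (i : ℕ) = 2*(k : ℕ)+1)) ∨
      (∀ i : Fin (2*m+1), u i = decide ((i : ℕ) = 2*m)))
    (hv : (∃ k : Fin m, ∀ i : Fin (2*m+1),
        v i = decide ((i : ℕ) = 2*(k : ℕ) ∨ (i : ℕ) = 2*(k : ℕ)+1)) ∨
      (∀ i : Fin (2*m+1), v i = decide ((i : ℕ) = 2*m)))
    (j j' : Fin (2*m+1))
    (h : ∀ i, i ≠ j → i ≠ j' → u i = v i) : u = v := by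
  have key : ∀ i : Fin (2*m+1), u i ≠ v i → (i : ℕ) = (j : ℕ) ∨ (i : ℕ) = (j' : ℕ) := by
    intro i hi
    by_contra hc
    push_neg at hc
    exact hi (h i (fun e => hc.1 (by rw [e])) (fun e => hc.2 (by rw [e])))
  rcases hu with ⟨k1, hk1⟩ | hu1 <;> rcases hv with ⟨k2, hk2⟩ | hv1
  · by_cases hk : k1 = k2
    · funext i; rw [hk1, hk2, hk]
    · exfalso
      have hne : (k1 : ℕ) ≠ (k2 : ℕ) := fun e => hk (Fin.ext e)
      have hl1 := k1.isLt
      have hl2 := k2.isLt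
      have h1 := key ⟨2*(k1:ℕ), by omega⟩ (by rw [hk1, hk2]; simp; omega)
      have h2 := key ⟨2*(k1:ℕ)+1, by omega⟩ (by rw [hk1, hk2]; simp; omega)
      have h3 := key ⟨2*(k2:ℕ), by omega⟩ (by rw [hk1, hk2]; simp; omega)
      have h4 := key ⟨2*(k2:ℕ)+1, by omega⟩ (by rw [hk1, hk2]; simp; omega)
      simp only [Fin.val_mk] at h1 h2 h3 h4
      omega
  · exfalso
    have hl1 := k1.isLt
    have h1 := key ⟨2*(k1:ℕ), by omega⟩ (by rw [hk1, hv1]; simp; omega)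
    have h2 := key ⟨2*(k1:ℕ)+1, by omega⟩ (by rw [hk1, hv1]; simp; omega)
    have h3 := key ⟨2*m, by omega⟩ (by rw [hk1, hv1]; simp; omega)
    simp only [Fin.val_mk] at h1 h2 h3
    omega
  · exfalso
    have hl2 := k2.isLt
    have h1 := key ⟨2*(k2:ℕ), by omega⟩ (by rw [hu1, hk2]; simp; omega)
    have h2 := key ⟨2*(k2:ℕ)+1, by omega⟩ (by rw [hu1, hk2]; simp; omega)
    have h3 := key ⟨2*m, by omega⟩ (by rw [hu1, hk2]; simp; omega)
    simp only [Fin.val_mk] at h1 h2 h3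
    omega
  · funext i; rw [hu1, hv1]

lemma flip_acc_unique (m : ℕ) (g : (Fin (2*m+1) → Bool) → Bool)
    (hg : ∀ y : Fin (2*m+1) → Bool, g y = true ↔
      ((∃ j : Fin m, ∀ i : Fin (2*m+1),
          y i = decide ((i : ℕ) = 2*(j : ℕ) ∨ (i : ℕ) = 2*(j : ℕ)+1)) ∨
       (∀ i : Fin (2*m+1), y i = decide ((i : ℕ) = 2*m))))
    (y : Fin (2*m+1) → Bool) (j j' : Fin (2*m+1))
    (hj : g (flipBit y j) = true) (hj' : g (flipBit y j') = true) : j = j' := by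
  by_contra hne
  have heq := acc_unique m _ _ ((hg _).1 hj) ((hg _).1 hj') j j'
    (fun i hij hij' => by
      simp [flipBit, Function.update_of_ne hij, Function.update_of_ne hij'])
  have h2 : flipBit y j j = flipBit y j' j := congrFun heq j
  simp [flipBit, Function.update_of_ne hne] at h2

lemma rowflip_eq {m : ℕ} (x : Fin (2*m+1) × Fin (2*m+1) → Bool) (i j : Fin (2*m+1)) :
    (fun k => flipBit x (i, j) (i, k)) = flipBit (fun k => x (i, k)) j := by
  funext k
  by_cases h : k = j
  · subst h
    simp [flipBit]
  · simp only [flipBit]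
    rw [Function.update_of_ne (by simp [Prod.ext_iff, h]), Function.update_of_ne h]

lemma rowflip_ne {m : ℕ} (x : Fin (2*m+1) × Fin (2*m+1) → Bool) (i i' j : Fin (2*m+1))
    (h : i' ≠ i) : (fun k => flipBit x (i, j) (i', k)) = fun k => x (i', k) := by
  funext k
  exact Function.update_of_ne (by simp [Prod.ext_iff, h]) _ _

/-- Virza's function `f : {0,1}^{(2m+1)²} → {0,1}`, the OR of `2m+1` disjoint copies of
`g : {0,1}^{2m+1} → {0,1}` where `g y = 1` iff `y` is 1 exactly on some pair
`{y_{2j-1}, y_{2j}}` (`j ∈ [m]`) or exactly on `y_{2m+1}`, has sensitivity `s(f) = 2m+1`. -/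
theorem virza_sens (m : ℕ) (hm : 1 ≤ m)
    (g : (Fin (2*m+1) → Bool) → Bool)
    (hg : ∀ y : Fin (2*m+1) → Bool, g y = true ↔
      ((∃ j : Fin m, ∀ i : Fin (2*m+1),
          y i = decide ((i : ℕ) = 2*(j : ℕ) ∨ (i : ℕ) = 2*(j : ℕ)+1)) ∨
       (∀ i : Fin (2*m+1), y i = decide ((i : ℕ) = 2*m))))
    (f : (Fin (2*m+1) × Fin (2*m+1) → Bool) → Bool)
    (hf : ∀ x : Fin (2*m+1) × Fin (2*m+1) → Bool,
      f x = true ↔ ∃ i : Fin (2*m+1), g (fun j => x (i, j)) = true) :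
    sens f = 2*m+1 := by
  classical
  apply le_antisymm
  · -- upper bound
    apply Finset.sup_le
    intro x _
    unfold sensAt
    rcases Bool.eq_false_or_eq_true (f x) with hfx | hfx
    swap
    · -- f x = false : each row contributes at most one sensitive bit
      have hrows : ∀ i, g (fun j => x (i, j)) = false := by
        intro i
        by_contra hcon
        rw [Bool.not_eq_false] at hcon
        have : f x = true := (hf x).2 ⟨i, hcon⟩
        rw [hfx] at this; exact Bool.false_ne_true this
      have hsens : ∀ p : Fin (2*m+1) × Fin (2*m+1),
          f (flipBit x p) ≠ f x → g (flipBit (fun k => x (p.1, k)) p.2) = true := by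
        rintro ⟨i, j⟩ hp
        have hft : f (flipBit x (i, j)) = true := by
          rcases Bool.eq_false_or_eq_true (f (flipBit x (i,j))) with h | h
          · exact h
          · exact absurd (h.trans hfx.symm) hp
        obtain ⟨i', hi'⟩ := (hf _).1 hft
        by_cases hii : i' = i
        · subst hii
          rwa [rowflip_eq] at hi'
        · rw [rowflip_ne x i i' j hii] at hi'
          rw [hrows i'] at hi'
          exact absurd hi' Bool.false_ne_true
      calc (Finset.univ.filter fun p : Fin (2*m+1) × Fin (2*m+1) =>
              f (flipBit x p) ≠ f x).card
          ≤ (Finset.univ : Finset (Fin (2*m+1))).card := by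
            apply Finset.card_le_card_of_injOn Prod.fst (fun _ _ => Finset.mem_univ _)
            intro p hp q hq hpq
            simp only [Finset.coe_filter, Set.mem_setOf_eq] at hp hq
            have h1 := hsens p hp.2
            have h2 := hsens q hq.2
            rw [hpq] at h1
            have := flip_acc_unique m g hg (fun k => x (q.1, k)) p.2 q.2 h1 h2
            exact Prod.ext hpq this
        _ = 2*m+1 := by simp
    · -- f x = true : only the unique accepting row's bits can be sensitive
      obtain ⟨i0, hi0⟩ := (hf x).1 hfx
      calc (Finset.univ.filter fun p : Fin (2*m+1) × Fin (2*m+1) =>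
              f (flipBit x p) ≠ f x).card
          ≤ ({i0} ×ˢ Finset.univ : Finset (Fin (2*m+1) × Fin (2*m+1))).card := by
            apply Finset.card_le_card
            rintro ⟨i, j⟩ hp
            rw [Finset.mem_filter] at hp
            simp only [Finset.mem_product, Finset.mem_singleton, Finset.mem_univ, and_true]
            by_contra hii
            apply hp.2
            rw [hfx]
            apply (hf _).2
            refine ⟨i0, ?_⟩
            rw [rowflip_ne x i i0 j (fun e => hii e.symm)]
            exact hi0
        _ = 2*m+1 := by simp
  · -- lower bound at the all-zero input
    set j2m : Fin (2*m+1) := ⟨2*m, by omega⟩ with hj2m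
    set x0 : Fin (2*m+1) × Fin (2*m+1) → Bool := fun _ => false with hx0
    have hgz : g (fun _ : Fin (2*m+1) => false) = false := by
      rcases Bool.eq_false_or_eq_true (g (fun _ : Fin (2*m+1) => false)) with h | h
      · exfalso
        rcases (hg _).1 h with ⟨k, hk⟩ | h1
        · have := hk ⟨2*(k:ℕ), by have := k.isLt; omega⟩
          simp at this
        · have := h1 ⟨2*m, by omega⟩
          simp at this
      · exact h
    have hfx0 : f x0 = false := by
      rcases Bool.eq_false_or_eq_true (f x0) with h | h
      · exfalso
        obtain ⟨i, hi⟩ := (hf x0).1 h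
        rw [show (fun j => x0 (i, j)) = (fun _ : Fin (2*m+1) => false) from rfl, hgz] at hi
        exact Bool.false_ne_true hi
      · exact h
    have hmem : ∀ i : Fin (2*m+1), f (flipBit x0 (i, j2m)) ≠ f x0 := by
      intro i
      rw [hfx0]
      have : f (flipBit x0 (i, j2m)) = true := by
        apply (hf _).2
        refine ⟨i, ?_⟩
        apply (hg _).2
        right
        intro k
        show flipBit x0 (i, j2m) (i, k) = _
        by_cases hk : k = j2m
        · subst hk
          simp [flipBit, x0, j2m]
        · have h1 : flipBit x0 (i, j2m) (i, k) = false :=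
            Function.update_of_ne (by simp [Prod.ext_iff, hk]) _ _
          rw [h1]
          have : (k : ℕ) ≠ 2*m := fun e => hk (Fin.ext (by simp [j2m, e]))
          simp [this]
      rw [this]
      simp
    have hsub : (Finset.univ ×ˢ {j2m} : Finset (Fin (2*m+1) × Fin (2*m+1))) ⊆
        Finset.univ.filter fun p => f (flipBit x0 p) ≠ f x0 := by
      rintro ⟨i, j⟩ hp
      simp only [Finset.mem_product, Finset.mem_univ, Finset.mem_singleton, true_and] at hp
      subst hp
      simp only [Finset.mem_filter, Finset.mem_univ, true_and]
      exact hmem i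
    have hcard : (Finset.univ ×ˢ {j2m} : Finset (Fin (2*m+1) × Fin (2*m+1))).card = 2*m+1 := by
      simp
    calc 2*m+1 = (Finset.univ ×ˢ {j2m} : Finset (Fin (2*m+1) × Fin (2*m+1))).card := hcard.symm
      _ ≤ sensAt f x0 := Finset.card_le_card hsub
      _ ≤ sens f := Finset.le_sup (Finset.mem_univ x0)
end

section
/- For every natural number m ≥ 1, Virza's function f : {0,1}^{(2m+1)²} → {0,1}, defined by f(x_{1,1},…,x_{2m+1,2m+1}) = ⋁_{i=1}^{2m+1} g(x_{i,1},…,x_{i,2m+1}) where g : {0,1}^{2m+1} → {0,1} satisfies g(y) = 1 iff either (there exists j ∈ [m] with y_{2j-1} = y_{2j} = 1 and y_k = 0 for all k ∉ {2j−1,2j}) or (y_{2m+1} = 1 and y_j = 0 for all j ≠ 2m+1), has block sensitivity bs(f) = (2m+1)(m+1). Consequently bs(f) = (1/2)·s(f)² + (1/2)·s(f) for this f. -/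
namespace VirzaAux

def pat (m : ℕ) (k : Fin (m+1)) : Fin (2*m+1) → Bool :=
  fun i => decide ((i : ℕ) = 2*(k:ℕ) ∨ (i : ℕ) = 2*(k:ℕ)+1)

lemma pat_ne_zero (m : ℕ) (k : Fin (m+1)) : pat m k ≠ (fun _ => false) := by
  intro h
  have h2 : (2*(k:ℕ)) < 2*m+1 := by have := k.isLt; omega
  have := congrFun h ⟨2*(k:ℕ), h2⟩
  simp [pat] at this

lemma pat_three' {m : ℕ} (k k' : Fin (m+1)) (hlt : (k:ℕ) < (k':ℕ)) :
    ∃ a b c : Fin (2*m+1), a ≠ b ∧ a ≠ c ∧ b ≠ c ∧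
      pat m k a ≠ pat m k' a ∧ pat m k b ≠ pat m k' b ∧ pat m k c ≠ pat m k' c := by
  have hk' := k'.isLt
  refine ⟨⟨2*(k:ℕ), by omega⟩, ⟨2*(k:ℕ)+1, by omega⟩, ⟨2*(k':ℕ), by omega⟩,
    ?_, ?_, ?_, ?_, ?_, ?_⟩ <;>
    simp [pat, Fin.ext_iff] <;> omega

lemma pat_three {m : ℕ} (k k' : Fin (m+1)) (hne : k ≠ k') :
    ∃ a b c : Fin (2*m+1), a ≠ b ∧ a ≠ c ∧ b ≠ c ∧
      pat m k a ≠ pat m k' a ∧ pat m k b ≠ pat m k' b ∧ pat m k c ≠ pat m k' c := by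
  rcases lt_or_gt_of_ne (fun h => hne (Fin.ext h) : (k:ℕ) ≠ (k':ℕ)) with h | h
  · exact pat_three' k k' h
  · obtain ⟨a, b, c, hab, hac, hbc, ha, hb, hc⟩ := pat_three' k' k h
    exact ⟨a, b, c, hab, hac, hbc, ha.symm, hb.symm, hc.symm⟩

/-- Two distinct single-bit flips of `y` cannot both land on accepted patterns. -/
lemma flip_unique {m : ℕ} (y : Fin (2*m+1) → Bool) (k k' : Fin (m+1))
    (j j' : Fin (2*m+1)) (hne : j ≠ j')
    (hk : flipBit y j = pat m k) (hk' : flipBit y j' = pat m k') : False := by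
  have hkk' : k ≠ k' := by
    intro h; subst h
    have h1 : (!y j) = pat m k j := by rw [← hk]; simp [flipBit]
    have h2 : y j = pat m k j := by
      rw [← hk']; simp [flipBit, Function.update_of_ne hne]
    rw [← h2] at h1
    simp at h1
  have hout : ∀ i, i ≠ j → i ≠ j' → pat m k i = pat m k' i := by
    intro i h1 h2
    have a := congrFun hk i
    have b := congrFun hk' i
    rw [flipBit, Function.update_of_ne h1] at a
    rw [flipBit, Function.update_of_ne h2] at b
    rw [← a, ← b]
  obtain ⟨a, b, c, hab, hac, hbc, ha, hb, hc⟩ := pat_three k k' hkk'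
  have ha' : a = j ∨ a = j' := by
    by_contra h; push_neg at h; exact ha (hout a h.1 h.2)
  have hb' : b = j ∨ b = j' := by
    by_contra h; push_neg at h; exact hb (hout b h.1 h.2)
  have hc' : c = j ∨ c = j' := by
    by_contra h; push_neg at h; exact hc (hout c h.1 h.2)
  rcases ha' with rfl | rfl <;> rcases hb' with h1 | h1 <;> rcases hc' with h2 | h2 <;>
    simp_all

end VirzaAux

open VirzaAux in
/-- Virza's function `f : {0,1}^{(2m+1)²} → {0,1}`, the OR of `2m+1` disjoint copies of
`g : {0,1}^{2m+1} → {0,1}` where `g y = 1` iff `y` is 1 exactly on some pair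
`{y_{2j-1}, y_{2j}}` (`j ∈ [m]`) or exactly on `y_{2m+1}`, has block sensitivity
`bs(f) = (2m+1)(m+1)`; consequently `bs(f) = (1/2)·s(f)² + (1/2)·s(f)`, stated over ℕ
as `2·bs(f) = s(f)² + s(f)`. -/
theorem virza_bs (m : ℕ) (hm : 1 ≤ m)
    (g : (Fin (2*m+1) → Bool) → Bool)
    (hg : ∀ y : Fin (2*m+1) → Bool, g y = true ↔
      ((∃ j : Fin m, ∀ i : Fin (2*m+1),
          y i = decide ((i : ℕ) = 2*(j : ℕ) ∨ (i : ℕ) = 2*(j : ℕ)+1)) ∨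
       (∀ i : Fin (2*m+1), y i = decide ((i : ℕ) = 2*m))))
    (f : (Fin (2*m+1) × Fin (2*m+1) → Bool) → Bool)
    (hf : ∀ x : Fin (2*m+1) × Fin (2*m+1) → Bool,
      f x = true ↔ ∃ i : Fin (2*m+1), g (fun j => x (i, j)) = true) :
    bs f = (2*m+1)*(m+1) ∧ 2 * bs f = (sens f)^2 + sens f := by
  classical
  -- reformulate hg
  have hg' : ∀ y, g y = true ↔ ∃ k : Fin (m+1), y = pat m k := by
    intro y
    rw [hg]
    constructor
    · rintro (⟨j, hj⟩ | h)
      · exact ⟨⟨(j:ℕ), by omega⟩, funext fun i => hj i⟩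
      · refine ⟨⟨m, by omega⟩, funext fun i => ?_⟩
        rw [h i]
        have := i.isLt
        simp only [pat]
        exact decide_eq_decide.mpr (by omega)
    · rintro ⟨k, rfl⟩
      by_cases hk : (k:ℕ) < m
      · exact Or.inl ⟨⟨(k:ℕ), hk⟩, fun i => rfl⟩
      · have hkm : (k:ℕ) = m := by have := k.isLt; omega
        refine Or.inr fun i => ?_
        have := i.isLt
        simp only [pat]
        exact decide_eq_decide.mpr (by omega)
  -- g of zero row is false
  have hg0 : g (fun _ => false) = false := by
    rw [← Bool.not_eq_true, hg']
    rintro ⟨k, hk⟩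
    exact pat_ne_zero m k hk.symm
  -- f x = false iff all rows false
  have hf0 : ∀ x, f x = false ↔ ∀ i, g (fun j => x (i, j)) = false := by
    intro x
    rw [← Bool.not_eq_true, hf]
    push_neg
    simp [Bool.not_eq_true]
  -- key upper bound for block sensitivity
  have keyA : ∀ (x : Fin (2*m+1) × Fin (2*m+1) → Bool) (b : ℕ),
      (∃ Bl : Fin b → Finset (Fin (2*m+1) × Fin (2*m+1)),
        (Pairwise fun p q => Disjoint (Bl p) (Bl q)) ∧
        ∀ p, f (flipBlock x (Bl p)) ≠ f x) → b ≤ (2*m+1)*(m+1) := by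
    rintro x b ⟨Bl, hdisj, hflip⟩
    by_cases hx : f x = true
    · -- each block meets the accepted row i0
      obtain ⟨i0, hi0⟩ := (hf x).mp hx
      have hch : ∀ p, ∃ j, (i0, j) ∈ Bl p := by
        intro p
        by_contra h
        push_neg at h
        have heq : (fun j => flipBlock x (Bl p) (i0, j)) = fun j => x (i0, j) := by
          funext j; simp [flipBlock, h j]
        have hft : f (flipBlock x (Bl p)) = true := (hf _).mpr ⟨i0, by rw [heq]; exact hi0⟩
        exact hflip p (hft.trans hx.symm)
      choose jp hjp using hch
      have hinj : Function.Injective jp := by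
        intro p q hpq
        by_contra hne
        have h2 := hjp q
        rw [← hpq] at h2
        exact Finset.disjoint_left.mp (hdisj hne) (hjp p) h2
      have hcard := Fintype.card_le_of_injective jp hinj
      simp only [Fintype.card_fin] at hcard
      calc b ≤ 2*m+1 := hcard
        _ ≤ (2*m+1)*(m+1) := Nat.le_mul_of_pos_right _ (by omega)
    · have hx' : f x = false := by simpa using hx
      have hrows := (hf0 x).mp hx'
      have hch : ∀ p, ∃ (i : Fin (2*m+1)) (k : Fin (m+1)),
          (fun j => flipBlock x (Bl p) (i, j)) = pat m k := by
        intro p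
        have hft : f (flipBlock x (Bl p)) = true := by
          have := hflip p
          rw [hx'] at this
          simpa using this
        obtain ⟨i, hi⟩ := (hf _).mp hft
        obtain ⟨k, hk⟩ := (hg' _).mp hi
        exact ⟨i, k, hk⟩
      choose ip kp hp using hch
      have hinj : Function.Injective (fun p => (ip p, kp p)) := by
        intro p q hpq
        by_contra hne
        have h1 : ip p = ip q := congrArg Prod.fst hpq
        have h2 : kp p = kp q := congrArg Prod.snd hpq
        have hmem : ∀ j, ((ip p, j) ∈ Bl p ↔ (ip p, j) ∈ Bl q) := by
          intro j
          have e1 := congrFun (hp p) j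
          have e2 : flipBlock x (Bl q) (ip p, j) = pat m (kp p) j := by
            rw [h1, h2]; exact congrFun (hp q) j
          have e12 : flipBlock x (Bl p) (ip p, j) = flipBlock x (Bl q) (ip p, j) :=
            e1.trans e2.symm
          by_cases h3 : (ip p, j) ∈ Bl p <;> by_cases h4 : (ip p, j) ∈ Bl q <;>
            simp [flipBlock, h3, h4] at e12 <;> tauto
        have hne' : (fun j => x (ip p, j)) ≠ pat m (kp p) := by
          intro h
          have hh := hrows (ip p)
          rw [h, (hg' (pat m (kp p))).mpr ⟨_, rfl⟩] at hh
          exact Bool.true_eq_false.mp hh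
        obtain ⟨j, hj⟩ : ∃ j, x (ip p, j) ≠ pat m (kp p) j := by
          by_contra h; push_neg at h; exact hne' (funext h)
        have hjmem : (ip p, j) ∈ Bl p := by
          by_contra h
          have := congrFun (hp p) j
          simp [flipBlock, h] at this
          exact hj this
        exact Finset.disjoint_left.mp (hdisj hne) hjmem ((hmem j).mp hjmem)
      have hcard := Fintype.card_le_of_injective _ hinj
      simpa using hcard
  have hbsA : ∀ x, bsAt f x ≤ (2*m+1)*(m+1) := by
    intro x
    exact csSup_le' (fun b hb => keyA x b hb)
  -- the all-zero input
  have hfx0 : f (fun _ => false) = false := by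
    rw [hf0]
    intro i
    exact hg0
  -- a helper: if a row of x equals a pattern then f x = true
  have hfpat : ∀ (i : Fin (2*m+1)) (k : Fin (m+1)) (x : Fin (2*m+1) × Fin (2*m+1) → Bool),
      (fun j => x (i, j)) = pat m k → f x = true := by
    intro i k x h
    exact (hf x).mpr ⟨i, (hg' _).mpr ⟨k, h⟩⟩
  -- lower bound witness at the all-zero input
  have hmemN : ((2*m+1)*(m+1)) ∈ {b : ℕ | ∃ Bl : Fin b → Finset (Fin (2*m+1) × Fin (2*m+1)),
      (Pairwise fun p q => Disjoint (Bl p) (Bl q)) ∧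
      ∀ p, f (flipBlock (fun _ => false) (Bl p)) ≠ f (fun _ => false)} := by
    refine ⟨fun p => Finset.univ.filter (fun z =>
        z.1 = (finProdFinEquiv.symm p).1 ∧
        ((z.2:ℕ) = 2*(((finProdFinEquiv.symm p).2 : Fin (m+1)):ℕ) ∨
         (z.2:ℕ) = 2*(((finProdFinEquiv.symm p).2 : Fin (m+1)):ℕ)+1)), ?_, ?_⟩
    · intro p q hpq
      rw [Finset.disjoint_left]
      intro z hz1 hz2
      simp only [Finset.mem_filter, Finset.mem_univ, true_and] at hz1 hz2
      obtain ⟨ha1, ha2⟩ := hz1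
      obtain ⟨hb1, hb2⟩ := hz2
      refine hpq (finProdFinEquiv.symm.injective ?_)
      refine Prod.ext (by rw [← ha1, ← hb1]) (Fin.ext ?_)
      omega
    · intro p
      rw [hfx0]
      have hft : f (flipBlock (fun _ => false)
          (Finset.univ.filter (fun z : Fin (2*m+1) × Fin (2*m+1) =>
            z.1 = (finProdFinEquiv.symm p).1 ∧
            ((z.2:ℕ) = 2*(((finProdFinEquiv.symm p).2 : Fin (m+1)):ℕ) ∨
             (z.2:ℕ) = 2*(((finProdFinEquiv.symm p).2 : Fin (m+1)):ℕ)+1)))) = true := by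
        refine hfpat (finProdFinEquiv.symm p).1 (finProdFinEquiv.symm p).2 _ ?_
        funext j
        simp only [flipBlock, Finset.mem_filter, Finset.mem_univ, true_and, pat]
        by_cases h : (j:ℕ) = 2*(((finProdFinEquiv.symm p).2 : Fin (m+1)):ℕ) ∨
            (j:ℕ) = 2*(((finProdFinEquiv.symm p).2 : Fin (m+1)):ℕ)+1
        · simp [h]
        · simp [h]
      rw [hft]
      simp
  have hbs_lower : (2*m+1)*(m+1) ≤ bs f := by
    have h1 : (2*m+1)*(m+1) ≤ bsAt f (fun _ => false) :=
      le_csSup ⟨(2*m+1)*(m+1), fun b hb => keyA _ b hb⟩ hmemN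
    exact le_trans h1 (Finset.le_sup (Finset.mem_univ _))
  have hbs : bs f = (2*m+1)*(m+1) :=
    le_antisymm (Finset.sup_le fun x _ => hbsA x) hbs_lower
  -- row manipulation lemmas for single-bit flips
  have rowflip : ∀ (x : Fin (2*m+1) × Fin (2*m+1) → Bool) (i j : Fin (2*m+1)),
      (fun j' => flipBit x (i, j) (i, j')) = flipBit (fun j' => x (i, j')) j := by
    intro x i j
    funext j'
    by_cases h : j' = j
    · subst h; simp [flipBit]
    · simp [flipBit, Function.update_apply, h, Prod.ext_iff]
  have rowother : ∀ (x : Fin (2*m+1) × Fin (2*m+1) → Bool) (i i' j : Fin (2*m+1)), i' ≠ i →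
      (fun j' => flipBit x (i, j) (i', j')) = fun j' => x (i', j') := by
    intro x i i' j h
    funext j'
    exact Function.update_of_ne (by simp [Prod.ext_iff, h]) _ _
  -- at a 0-input, a sensitive bit makes its own row a pattern
  have haccept : ∀ (x : Fin (2*m+1) × Fin (2*m+1) → Bool), f x = false →
      ∀ (i j : Fin (2*m+1)), f (flipBit x (i, j)) = true →
      ∃ k, flipBit (fun j' => x (i, j')) j = pat m k := by
    intro x hx i j hz
    obtain ⟨i', hi'⟩ := (hf _).mp hz
    by_cases h : i' = i
    · subst h
      rw [rowflip x i' j] at hi'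
      exact (hg' _).mp hi'
    · rw [rowother x i i' j h] at hi'
      rw [(hf0 x).mp hx i'] at hi'
      exact absurd hi' (by simp)
  -- sensitivity upper bound
  have hsens_le : ∀ x, sensAt f x ≤ 2*m+1 := by
    intro x
    unfold sensAt
    by_cases hx : f x = true
    · obtain ⟨i0, hi0⟩ := (hf x).mp hx
      have hsub : (Finset.univ.filter fun z => f (flipBit x z) ≠ f x) ⊆
          Finset.univ.image (fun j : Fin (2*m+1) => (i0, j)) := by
        intro z hz
        simp only [Finset.mem_filter, Finset.mem_univ, true_and] at hz
        obtain ⟨i, j⟩ := z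
        simp only [Finset.mem_image, Finset.mem_univ, true_and]
        refine ⟨j, ?_⟩
        by_contra hne
        have hii : i0 ≠ i := fun h => hne (by rw [h])
        have hft : f (flipBit x (i, j)) = true := by
          refine (hf _).mpr ⟨i0, ?_⟩
          rw [rowother x i i0 j hii]
          exact hi0
        exact hz (hft.trans hx.symm)
      calc (Finset.univ.filter fun z => f (flipBit x z) ≠ f x).card
          ≤ (Finset.univ.image (fun j : Fin (2*m+1) => (i0, j))).card :=
            Finset.card_le_card hsub
        _ ≤ (Finset.univ : Finset (Fin (2*m+1))).card := Finset.card_image_le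
        _ = 2*m+1 := by simp
    · have hx' : f x = false := by simpa using hx
      have hinj : Set.InjOn (fun z : Fin (2*m+1) × Fin (2*m+1) => z.1)
          ((Finset.univ.filter fun z => f (flipBit x z) ≠ f x) : Finset _) := by
        intro z hz z' hz' hzz
        simp only [Finset.coe_filter, Set.mem_setOf_eq, Finset.mem_univ, true_and] at hz hz'
        have hzt : f (flipBit x z) = true := by rw [hx'] at hz; simpa using hz
        have hzt' : f (flipBit x z') = true := by rw [hx'] at hz'; simpa using hz'
        obtain ⟨i, j⟩ := z
        obtain ⟨i', j'⟩ := z'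
        simp only at hzz
        subst hzz
        obtain ⟨k, hk⟩ := haccept x hx' i j hzt
        obtain ⟨k', hk'⟩ := haccept x hx' i j' hzt'
        by_cases hjj : j = j'
        · rw [hjj]
        · exact absurd (flip_unique _ k k' j j' hjj hk hk') (by simp)
      have h := Finset.card_le_card_of_injOn (fun z : Fin (2*m+1) × Fin (2*m+1) => z.1)
        (fun z _ => Finset.mem_univ z.1) hinj
      simpa using h
  -- sensitivity lower bound at the all-zero input
  have hsens_lower : 2*m+1 ≤ sens f := by
    have hkey : (Finset.univ.filter fun z : Fin (2*m+1) × Fin (2*m+1) =>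
        f (flipBit (fun _ => false) z) ≠ f (fun _ => false)) =
        Finset.univ.image (fun i : Fin (2*m+1) => (i, (⟨2*m, by omega⟩ : Fin (2*m+1)))) := by
      ext ⟨i, j⟩
      simp only [Finset.mem_filter, Finset.mem_univ, true_and, Finset.mem_image, hfx0]
      constructor
      · intro hz
        have hz' : f (flipBit (fun _ => false) (i, j)) = true := by simpa using hz
        obtain ⟨k, hk⟩ := haccept _ hfx0 i j hz'
        have hj2 : (j:ℕ) = 2*(k:ℕ) := by
          have h2k := congrFun hk ⟨2*(k:ℕ), by have := k.isLt; omega⟩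
          simp [flipBit, Function.update_apply, pat, Fin.ext_iff] at h2k
          omega
        have hkm : (k:ℕ) = m := by
          by_contra hklt
          have hklt' : (k:ℕ) < m := by have := k.isLt; omega
          have h2k1 := congrFun hk ⟨2*(k:ℕ)+1, by omega⟩
          simp [flipBit, Function.update_apply, pat, Fin.ext_iff] at h2k1
          omega
        exact ⟨i, by simp [Prod.ext_iff, Fin.ext_iff]; omega⟩
      · rintro ⟨i', hi'⟩
        rw [← hi']
        have hft : f (flipBit (fun _ => false) (i', (⟨2*m, by omega⟩ : Fin (2*m+1)))) = true := by
          refine hfpat i' ⟨m, by omega⟩ _ ?_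
          funext j'
          have hj' := j'.isLt
          by_cases hh : (j':ℕ) = 2*m <;>
            simp [flipBit, Function.update_apply, Prod.ext_iff, Fin.ext_iff, pat, hh] <;>
            omega
        rw [hft]
        simp
    have hcard : sensAt f (fun _ => false) = 2*m+1 := by
      unfold sensAt
      rw [hkey, Finset.card_image_of_injective _
        (fun a b h => (Prod.ext_iff.mp h).1)]
      simp
    calc 2*m+1 = sensAt f (fun _ => false) := hcard.symm
      _ ≤ sens f := Finset.le_sup (Finset.mem_univ _)
  have hsens : sens f = 2*m+1 :=
    le_antisymm (Finset.sup_le fun x _ => hsens_le x) hsens_lower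
  refine ⟨hbs, ?_⟩
  rw [hbs, hsens]
  ring
end

section
/- Let g : {0,1}^N → {0,1} be a Boolean function with g(0^N) = 0 and 0-sensitivity s_0(g) = 1, and let B_1, …, B_k ⊆ [N] be pairwise disjoint minimal sensitive blocks of g at the all-zeros input 0^N (i.e., g(0^{(B_i)}) = 1 for each i, and g(0^{(B')}) = 0 for every proper subset B' ⊊ B_i). For each i, the minimal 1-certificate subcube S_i containing 0^{(B_i)} (a set of inputs specified by fixing some coordinates to 0 and some to 1) must fix all coordinates of B_i to 1; moreover the subcubes S_1, …, S_k are pairwise distinct, and for some index i the number of coordinates that S_i fixes to 0 is at least 3(k−1)/2. -/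
/-- The subcube of `{0,1}^N` consisting of the inputs whose coordinates in `I` are
fixed to `0` and whose coordinates in `J` are fixed to `1`. -/
def subCube {ι : Type} (I J : Finset ι) : Set (ι → Bool) :=
  {x | (∀ i ∈ I, x i = false) ∧ ∀ j ∈ J, x j = true}

section Aux

variable {N : ℕ}

/-- The indicator input of a finset. -/
def ind (X : Finset (Fin N)) : Fin N → Bool :=
  fun j => if j ∈ X then true else false

lemma ind_eq_true {X : Finset (Fin N)} {i : Fin N} : ind X i = true ↔ i ∈ X := by
  by_cases h : i ∈ X <;> simp [ind, h]

lemma ind_eq_false {X : Finset (Fin N)} {i : Fin N} : ind X i = false ↔ i ∉ X := by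
  by_cases h : i ∈ X <;> simp [ind, h]

lemma flipBlock_zero (X : Finset (Fin N)) :
    flipBlock (fun _ => false) X = ind X := by
  funext j
  by_cases h : j ∈ X <;> simp [flipBlock, ind, h]

lemma flipBit_ind_not_mem {X : Finset (Fin N)} {i : Fin N} (h : i ∉ X) :
    flipBit (ind X) i = ind (insert i X) := by
  funext j
  by_cases hj : j = i
  · subst hj
    simp [flipBit, ind, h]
  · simp [flipBit, Function.update_apply, ind, hj, Finset.mem_insert]

lemma flipBit_ind_mem {X : Finset (Fin N)} {i : Fin N} (h : i ∈ X) :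
    flipBit (ind X) i = ind (X.erase i) := by
  funext j
  by_cases hj : j = i
  · subst hj
    simp [flipBit, ind, h]
  · simp [flipBit, Function.update_apply, ind, hj, Finset.mem_erase]

/-- From `s₀(g) = 1`: a zero-input cannot have two sensitive bits. -/
lemma sens_unique (g : (Fin N → Bool) → Bool) (hs0 : sens0 g = 1)
    {x : Fin N → Bool} (hx : g x = false) {i j : Fin N} (hij : j ≠ i)
    (hi : g (flipBit x i) = true) : g (flipBit x j) = false := by
  by_contra h
  have hj : g (flipBit x j) = true := by
    cases hgj : g (flipBit x j)
    · exact absurd hgj h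
    · rfl
  have hle : sensAt g x ≤ 1 := by
    rw [← hs0]
    exact Finset.le_sup (Finset.mem_filter.mpr ⟨Finset.mem_univ x, hx⟩)
  have hsubs : ({j, i} : Finset (Fin N)) ⊆
      Finset.univ.filter (fun t => g (flipBit x t) ≠ g x) := by
    intro t ht
    rcases Finset.mem_insert.mp ht with rfl | ht'
    · exact Finset.mem_filter.mpr ⟨Finset.mem_univ _, by simp [hj, hx]⟩
    · rcases Finset.mem_singleton.mp ht' with rfl
      exact Finset.mem_filter.mpr ⟨Finset.mem_univ _, by simp [hi, hx]⟩
  have h2 : 2 ≤ sensAt g x := by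
    calc 2 = ({j, i} : Finset (Fin N)).card := (Finset.card_pair hij).symm
      _ ≤ _ := Finset.card_le_card hsubs
  omega

/-- Zero-propagation family: if `C` is a minimal sensitive block at `0` and
`(I₂, ·)` is a certificate covering everything above `C` avoiding `I₂`,
then `C` minus one element plus anything (disjoint from `C` and `I₂`) is a 0-input. -/
lemma family (g : (Fin N → Bool) → Bool) (hs0 : sens0 g = 1)
    (C I2 : Finset (Fin N))
    (hCmin : ∀ C' ⊂ C, g (ind C') = false)
    (cert2 : ∀ X, C ⊆ X → Disjoint I2 X → g (ind X) = true)
    (hd2 : Disjoint I2 C)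
    {c : Fin N} (hc : c ∈ C) :
    ∀ E : Finset (Fin N), Disjoint E C → Disjoint E I2 →
      g (ind (C.erase c ∪ E)) = false := by
  intro E
  induction E using Finset.induction_on with
  | empty =>
    intro _ _
    simpa using hCmin (C.erase c) (Finset.erase_ssubset hc)
  | insert e E' hni ih =>
    intro hEC hEI
    have hE'C : Disjoint E' C := hEC.mono_left (Finset.subset_insert e E')
    have hE'I : Disjoint E' I2 := hEI.mono_left (Finset.subset_insert e E')
    have heC : e ∉ C := Finset.disjoint_left.mp hEC (Finset.mem_insert_self e E')
    have heI : e ∉ I2 := Finset.disjoint_left.mp hEI (Finset.mem_insert_self e E')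
    have hx : g (ind (C.erase c ∪ E')) = false := ih hE'C hE'I
    have hcnot : c ∉ C.erase c ∪ E' := by
      simp only [Finset.mem_union, Finset.mem_erase]
      rintro (⟨hne, _⟩ | hcE')
      · exact hne rfl
      · exact (Finset.disjoint_left.mp hE'C hcE') hc
    have henot : e ∉ C.erase c ∪ E' := by
      simp only [Finset.mem_union, Finset.mem_erase]
      rintro (⟨_, heC'⟩ | heE')
      · exact heC heC'
      · exact hni heE'
    have hflipc : g (flipBit (ind (C.erase c ∪ E')) c) = true := by
      rw [flipBit_ind_not_mem hcnot]
      have : insert c (C.erase c ∪ E') = C ∪ E' := by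
        rw [← Finset.insert_union, Finset.insert_erase hc]
      rw [this]
      exact cert2 _ Finset.subset_union_left
        (Finset.disjoint_union_right.mpr ⟨hd2, hE'I.symm⟩)
    have hec : e ≠ c := fun h => heC (h ▸ hc)
    have := sens_unique g hs0 hx hec hflipc
    rw [flipBit_ind_not_mem henot] at this
    rwa [← Finset.union_insert] at this

lemma pick_small {T S : Finset (Fin N)} (hTS : T ⊆ S) (hS : S.Nonempty)
    (h1 : T.card ≤ 1) : ∃ a, a ∈ S ∧ ∀ x ∈ T, x = a := by
  rcases T.eq_empty_or_nonempty with h | ⟨t, ht⟩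
  · obtain ⟨a, ha⟩ := hS
    exact ⟨a, ha, fun x hx => by simp [h] at hx⟩
  · exact ⟨t, hTS ht, fun x hx => Finset.card_le_one.mp h1 x hx t ht⟩

/-- The `(a,b) = (2,0)` case of the pair lemma is impossible. -/
lemma pair20 (g : (Fin N → Bool) → Bool) (hs0 : sens0 g = 1)
    (Bk C I1 I2 : Finset (Fin N)) (hBC : Disjoint Bk C)
    (hCmin : ∀ C' ⊂ C, g (ind C') = false)
    (hd1 : Disjoint I1 Bk) (hd2 : Disjoint I2 C)
    (cert1 : ∀ X, Bk ⊆ X → Disjoint I1 X → g (ind X) = true)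
    (cert2 : ∀ X, C ⊆ X → Disjoint I2 X → g (ind X) = true)
    {c₁ c₂ : Fin N} (hne : c₁ ≠ c₂) (hI1C : I1 ∩ C = {c₁, c₂})
    (hI2B : I2 ∩ Bk = ∅) : False := by
  have hc₁C : c₁ ∈ C := by
    have : c₁ ∈ I1 ∩ C := hI1C ▸ Finset.mem_insert_self c₁ {c₂}
    exact (Finset.mem_inter.mp this).2
  have hc₂C : c₂ ∈ C := by
    have : c₂ ∈ I1 ∩ C := hI1C ▸ Finset.mem_insert_of_mem (Finset.mem_singleton_self c₂)
    exact (Finset.mem_inter.mp this).2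
  have hdBI2 : Disjoint Bk I2 := by
    rw [Finset.disjoint_left]
    intro x hxB hxI
    have : x ∈ I2 ∩ Bk := Finset.mem_inter.mpr ⟨hxI, hxB⟩
    simp [hI2B] at this
  have hx : g (ind (C.erase c₁ ∪ Bk)) = false :=
    family g hs0 C I2 hCmin cert2 hd2 hc₁C Bk hBC hdBI2
  have hc₁not : c₁ ∉ C.erase c₁ ∪ Bk := by
    simp only [Finset.mem_union, Finset.mem_erase]
    rintro (⟨hne', _⟩ | hcB)
    · exact hne' rfl
    · exact (Finset.disjoint_left.mp hBC hcB) hc₁C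
  have hflipc₁ : g (flipBit (ind (C.erase c₁ ∪ Bk)) c₁) = true := by
    rw [flipBit_ind_not_mem hc₁not]
    have : insert c₁ (C.erase c₁ ∪ Bk) = C ∪ Bk := by
      rw [← Finset.insert_union, Finset.insert_erase hc₁C]
    rw [this]
    exact cert2 _ Finset.subset_union_left
      (Finset.disjoint_union_right.mpr ⟨hd2, hdBI2.symm⟩)
  have hc₂mem : c₂ ∈ C.erase c₁ ∪ Bk :=
    Finset.mem_union_left _ (Finset.mem_erase.mpr ⟨hne.symm, hc₂C⟩)
  have hz := sens_unique g hs0 hx hne.symm hflipc₁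
  rw [flipBit_ind_mem hc₂mem] at hz
  have herase : (C.erase c₁ ∪ Bk).erase c₂ = (C.erase c₁).erase c₂ ∪ Bk := by
    rw [Finset.erase_union_distrib]
    congr 1
    exact Finset.erase_eq_of_notMem (fun h => (Finset.disjoint_left.mp hBC h) hc₂C)
  rw [herase] at hz
  have hone : g (ind ((C.erase c₁).erase c₂ ∪ Bk)) = true := by
    apply cert1 _ Finset.subset_union_right
    apply Finset.disjoint_union_right.mpr
    refine ⟨?_, hd1⟩
    rw [Finset.disjoint_left]
    intro x hxI hxE
    have hxC : x ∈ C := Finset.mem_of_mem_erase (Finset.mem_of_mem_erase hxE)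
    have hmem2 : x ∈ I1 ∩ C := Finset.mem_inter.mpr ⟨hxI, hxC⟩
    rw [hI1C] at hmem2
    rcases Finset.mem_insert.mp hmem2 with rfl | h'
    · exact (Finset.mem_erase.mp (Finset.mem_of_mem_erase hxE)).1 rfl
    · exact (Finset.mem_erase.mp hxE).1 (Finset.mem_singleton.mp h')
  rw [hone] at hz
  exact absurd hz (by simp)

/-- The case `|I1 ∩ C| ≤ 1` and `|I2 ∩ Bk| ≤ 1` is impossible. -/
lemma pair11 (g : (Fin N → Bool) → Bool) (hg0 : g (fun _ => false) = false)
    (hs0 : sens0 g = 1)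
    (Bk C I1 I2 : Finset (Fin N)) (hBC : Disjoint Bk C)
    (hB1 : g (ind Bk) = true) (hC1 : g (ind C) = true)
    (hBmin : ∀ B' ⊂ Bk, g (ind B') = false)
    (hCmin : ∀ C' ⊂ C, g (ind C') = false)
    (hd1 : Disjoint I1 Bk) (hd2 : Disjoint I2 C)
    (cert1 : ∀ X, Bk ⊆ X → Disjoint I1 X → g (ind X) = true)
    (cert2 : ∀ X, C ⊆ X → Disjoint I2 X → g (ind X) = true)
    (ha : (I1 ∩ C).card ≤ 1) (hb : (I2 ∩ Bk).card ≤ 1) : False := by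
  have hBne : Bk.Nonempty := by
    rcases Bk.eq_empty_or_nonempty with h | h
    · rw [h] at hB1
      have : ind (∅ : Finset (Fin N)) = (fun _ => false) := by
        funext j; simp [ind]
      rw [this, hg0] at hB1
      exact absurd hB1 (by simp)
    · exact h
  have hCne : C.Nonempty := by
    rcases C.eq_empty_or_nonempty with h | h
    · rw [h] at hC1
      have : ind (∅ : Finset (Fin N)) = (fun _ => false) := by
        funext j; simp [ind]
      rw [this, hg0] at hC1
      exact absurd hC1 (by simp)
    · exact h
  obtain ⟨cs, hcsC, hcsu⟩ := pick_small Finset.inter_subset_right hCne ha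
  obtain ⟨bs, hbsB, hbsu⟩ := pick_small Finset.inter_subset_right hBne hb
  have hbscs : bs ≠ cs := fun h => (Finset.disjoint_left.mp hBC hbsB) (h ▸ hcsC)
  -- w := (C \ cs) ∪ (Bk \ bs) is a 0-input
  have hdE2 : Disjoint (Bk.erase bs) I2 := by
    rw [Finset.disjoint_left]
    intro x hxE hxI
    have : x ∈ I2 ∩ Bk := Finset.mem_inter.mpr ⟨hxI, Finset.mem_of_mem_erase hxE⟩
    exact (Finset.mem_erase.mp hxE).1 (hbsu x this)
  have hw : g (ind (C.erase cs ∪ Bk.erase bs)) = false :=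
    family g hs0 C I2 hCmin cert2 hd2 hcsC (Bk.erase bs)
      (hBC.mono_left (Finset.erase_subset _ _)) hdE2
  have hbsnot : bs ∉ C.erase cs ∪ Bk.erase bs := by
    simp only [Finset.mem_union, Finset.mem_erase]
    rintro (⟨_, hbsC⟩ | ⟨hne', _⟩)
    · exact (Finset.disjoint_left.mp hBC hbsB) hbsC
    · exact hne' rfl
  have hcsnot : cs ∉ C.erase cs ∪ Bk.erase bs := by
    simp only [Finset.mem_union, Finset.mem_erase]
    rintro (⟨hne', _⟩ | ⟨_, hcsB⟩)
    · exact hne' rfl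
    · exact (Finset.disjoint_left.mp hBC hcsB) hcsC
  have hflipbs : g (flipBit (ind (C.erase cs ∪ Bk.erase bs)) bs) = true := by
    rw [flipBit_ind_not_mem hbsnot]
    have : insert bs (C.erase cs ∪ Bk.erase bs) = C.erase cs ∪ Bk := by
      rw [← Finset.union_insert, Finset.insert_erase hbsB]
    rw [this]
    apply cert1 _ Finset.subset_union_right
    apply Finset.disjoint_union_right.mpr
    refine ⟨?_, hd1⟩
    rw [Finset.disjoint_left]
    intro x hxI hxE
    have : x ∈ I1 ∩ C := Finset.mem_inter.mpr ⟨hxI, Finset.mem_of_mem_erase hxE⟩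
    exact (Finset.mem_erase.mp hxE).1 (hcsu x this)
  have hz := sens_unique g hs0 hw hbscs.symm hflipbs
  rw [flipBit_ind_not_mem hcsnot] at hz
  have : insert cs (C.erase cs ∪ Bk.erase bs) = C ∪ Bk.erase bs := by
    rw [← Finset.insert_union, Finset.insert_erase hcsC]
  rw [this] at hz
  have hone : g (ind (C ∪ Bk.erase bs)) = true := by
    apply cert2 _ Finset.subset_union_left
    exact Finset.disjoint_union_right.mpr ⟨hd2, hdE2.symm⟩
  rw [hone] at hz
  exact absurd hz (by simp)

/-- The pair lemma: the two certificates fix at least 3 zeros inside the two blocks. -/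
lemma pair_three (g : (Fin N → Bool) → Bool) (hg0 : g (fun _ => false) = false)
    (hs0 : sens0 g = 1)
    (Bk C I1 I2 : Finset (Fin N)) (hBC : Disjoint Bk C)
    (hB1 : g (ind Bk) = true) (hC1 : g (ind C) = true)
    (hBmin : ∀ B' ⊂ Bk, g (ind B') = false)
    (hCmin : ∀ C' ⊂ C, g (ind C') = false)
    (hd1 : Disjoint I1 Bk) (hd2 : Disjoint I2 C)
    (cert1 : ∀ X, Bk ⊆ X → Disjoint I1 X → g (ind X) = true)
    (cert2 : ∀ X, C ⊆ X → Disjoint I2 X → g (ind X) = true) :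
    3 ≤ (I1 ∩ C).card + (I2 ∩ Bk).card := by
  by_contra hcon
  push_neg at hcon
  by_cases ha : (I1 ∩ C).card ≤ 1
  · by_cases hb : (I2 ∩ Bk).card ≤ 1
    · exact pair11 g hg0 hs0 Bk C I1 I2 hBC hB1 hC1 hBmin hCmin hd1 hd2 cert1 cert2 ha hb
    · -- (a, b) = (0, 2)
      have hb2 : (I2 ∩ Bk).card = 2 := by omega
      have ha0 : (I1 ∩ C).card = 0 := by omega
      obtain ⟨b₁, b₂, hbne, hI2B⟩ := Finset.card_eq_two.mp hb2
      exact pair20 g hs0 C Bk I2 I1 hBC.symm hBmin hd2 hd1 cert2 cert1 hbne hI2B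
        (Finset.card_eq_zero.mp ha0)
  · -- (a, b) = (2, 0)
    have ha2 : (I1 ∩ C).card = 2 := by omega
    have hb0 : (I2 ∩ Bk).card = 0 := by omega
    obtain ⟨c₁, c₂, hcne, hI1C⟩ := Finset.card_eq_two.mp ha2
    exact pair20 g hs0 Bk C I1 I2 hBC hCmin hd1 hd2 cert1 cert2 hcne hI1C
      (Finset.card_eq_zero.mp hb0)


end Aux

/-- Let `g : {0,1}^N → {0,1}` satisfy `g(0^N) = 0` and `s₀(g) = 1`, and let
`B_1, …, B_k` be pairwise disjoint minimal sensitive blocks of `g` at `0^N`.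
If for each `i` the subcube `S_i = subCube (I i) (J i)` is a 1-certificate subcube
containing `0^{(B_i)}` that is minimal at `0^{(B_i)}` (no strictly larger subcube
containing `0^{(B_i)}` is a 1-certificate subcube), then each `S_i` fixes all
coordinates of `B_i` to 1, the subcubes `S_1, …, S_k` are pairwise distinct, and for
some `i` the number of coordinates fixed to 0 by `S_i` is at least `3(k−1)/2`
(stated over ℕ as `3·(k−1) ≤ 2·|I i|`). -/
theorem minimal_certificate_subcubes {N k : ℕ} (hk : 1 ≤ k) (g : (Fin N → Bool) → Bool)
    (hg0 : g (fun _ => false) = false) (hs0 : sens0 g = 1)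
    (B : Fin k → Finset (Fin N))
    (hdisj : Pairwise fun p q => Disjoint (B p) (B q))
    (hsens : ∀ p, g (flipBlock (fun _ => false) (B p)) = true)
    (hmin : ∀ p, ∀ B' ⊂ B p, g (flipBlock (fun _ => false) B') = false)
    (I J : Fin k → Finset (Fin N))
    (hIJ : ∀ p, Disjoint (I p) (J p))
    (hmem : ∀ p, flipBlock (fun _ => false) (B p) ∈ subCube (I p) (J p))
    (hcert : ∀ p, ∀ x ∈ subCube (I p) (J p), g x = true)
    (hminimal : ∀ p, ∀ I' J' : Finset (Fin N), Disjoint I' J' →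
      flipBlock (fun _ => false) (B p) ∈ subCube I' J' →
      subCube (I p) (J p) ⊂ subCube I' J' →
      ¬ (∀ x ∈ subCube I' J', g x = true)) :
    (∀ p, B p ⊆ J p) ∧
    (∀ p q, p ≠ q → subCube (I p) (J p) ≠ subCube (I q) (J q)) ∧
    ∃ p, 3 * (k - 1) ≤ 2 * (I p).card := by
  classical
  have hmem' : ∀ p, ind (B p) ∈ subCube (I p) (J p) := fun p => by
    rw [← flipBlock_zero]; exact hmem p
  have hB1 : ∀ p, g (ind (B p)) = true := fun p => by
    rw [← flipBlock_zero]; exact hsens p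
  have hBmin' : ∀ p, ∀ B' ⊂ B p, g (ind B') = false := fun p B' h => by
    rw [← flipBlock_zero]; exact hmin p B' h
  have hBne : ∀ p, (B p).Nonempty := by
    intro p
    rcases (B p).eq_empty_or_nonempty with h | h
    · have h0 : ind (B p) = (fun _ => false) := by
        funext j; simp [ind, h]
      have := hB1 p
      rw [h0, hg0] at this
      exact absurd this (by simp)
    · exact h
  have hJsubB : ∀ p, J p ⊆ B p := fun p j hj => ind_eq_true.mp ((hmem' p).2 j hj)
  have hBsubJ : ∀ p, B p ⊆ J p := by
    intro p i hiB
    by_contra hiJ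
    have h1 := (hmem' p).1
    have h2 := (hmem' p).2
    have hsub : ind ((B p).erase i) ∈ subCube (I p) (J p) := by
      refine ⟨fun a ha => ?_, fun a ha => ?_⟩
      · exact ind_eq_false.mpr fun hmem'' =>
          (ind_eq_false.mp (h1 a ha)) (Finset.mem_of_mem_erase hmem'')
      · exact ind_eq_true.mpr (Finset.mem_erase.mpr
          ⟨fun h => hiJ (h ▸ ha), ind_eq_true.mp (h2 a ha)⟩)
    have hT := hcert p _ hsub
    rw [hBmin' p _ (Finset.erase_ssubset hiB)] at hT
    exact absurd hT (by simp)
  have cert : ∀ p, ∀ X, B p ⊆ X → Disjoint (I p) X → g (ind X) = true := by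
    intro p X hBX hdX
    apply hcert p
    exact ⟨fun i hi => ind_eq_false.mpr (Finset.disjoint_left.mp hdX hi),
      fun j hj => ind_eq_true.mpr (hBX (hJsubB p hj))⟩
  have hd1 : ∀ p, Disjoint (I p) (B p) := fun p => (hIJ p).mono_right (hBsubJ p)
  refine ⟨hBsubJ, ?_, ?_⟩
  · intro p q hpq heq
    have h := hmem' q
    rw [← heq] at h
    obtain ⟨i, hiB⟩ := hBne p
    have htrue : ind (B q) i = true := h.2 i (hBsubJ p hiB)
    exact Finset.disjoint_left.mp (hdisj hpq) hiB (ind_eq_true.mp htrue)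
  · have key : ∀ p q, p ≠ q → 3 ≤ ((I p) ∩ (B q)).card + ((I q) ∩ (B p)).card :=
      fun p q hpq =>
        pair_three g hg0 hs0 (B p) (B q) (I p) (I q) (hdisj hpq) (hB1 p) (hB1 q)
          (hBmin' p) (hBmin' q) (hd1 p) (hd1 q) (cert p) (cert q)
    have hpos : 0 < k := hk
    obtain ⟨p₀, _, hp₀⟩ := Finset.exists_max_image Finset.univ
      (fun p => (I p).card) ⟨⟨0, hpos⟩, Finset.mem_univ _⟩
    refine ⟨p₀, ?_⟩
    have hAle : ∀ p : Fin k,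
        ∑ q ∈ Finset.univ.erase p, ((I p) ∩ (B q)).card ≤ (I p).card := by
      intro p
      have hbij : ((Finset.univ.erase p).biUnion (fun q => (I p) ∩ (B q))).card
          = ∑ q ∈ Finset.univ.erase p, ((I p) ∩ (B q)).card :=
        Finset.card_biUnion (fun q _ r _ hqr =>
          Disjoint.mono Finset.inter_subset_right Finset.inter_subset_right (hdisj hqr))
      rw [← hbij]
      refine Finset.card_le_card (fun x hx => ?_)
      obtain ⟨q, _, hxq⟩ := Finset.mem_biUnion.mp hx
      exact (Finset.mem_inter.mp hxq).1
    have h3 : ∀ p : Fin k, (k - 1) * 3 ≤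
        ∑ q ∈ Finset.univ.erase p, (((I p) ∩ (B q)).card + ((I q) ∩ (B p)).card) := by
      intro p
      have hcard : (Finset.univ.erase p).card = k - 1 := by
        rw [Finset.card_erase_of_mem (Finset.mem_univ p), Finset.card_univ,
          Fintype.card_fin]
      have hle := Finset.card_nsmul_le_sum (Finset.univ.erase p)
        (fun q => ((I p) ∩ (B q)).card + ((I q) ∩ (B p)).card) 3
        (fun q hq => key p q (Ne.symm (Finset.mem_erase.mp hq).1))
      rwa [hcard, smul_eq_mul] at hle
    have hsum1 : k * ((k - 1) * 3) ≤
        ∑ p : Fin k, ∑ q ∈ Finset.univ.erase p,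
          (((I p) ∩ (B q)).card + ((I q) ∩ (B p)).card) := by
      calc k * ((k - 1) * 3) = ∑ _p : Fin k, (k - 1) * 3 := by
            rw [Finset.sum_const, Finset.card_univ, Fintype.card_fin, smul_eq_mul]
        _ ≤ _ := Finset.sum_le_sum (fun p _ => h3 p)
    have hsplit : ∑ p : Fin k, ∑ q ∈ Finset.univ.erase p,
          (((I p) ∩ (B q)).card + ((I q) ∩ (B p)).card)
        = (∑ p : Fin k, ∑ q ∈ Finset.univ.erase p, ((I p) ∩ (B q)).card)
          + ∑ p : Fin k, ∑ q ∈ Finset.univ.erase p, ((I q) ∩ (B p)).card := by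
      simp only [Finset.sum_add_distrib]
    have hswap : (∑ p : Fin k, ∑ q ∈ Finset.univ.erase p, ((I q) ∩ (B p)).card)
        = ∑ p : Fin k, ∑ q ∈ Finset.univ.erase p, ((I p) ∩ (B q)).card := by
      exact Finset.sum_comm' (by
        intro x y
        simp only [Finset.mem_univ, Finset.mem_erase, true_and, and_true]
        exact ne_comm)
    have hA2 : (∑ p : Fin k, ∑ q ∈ Finset.univ.erase p, ((I p) ∩ (B q)).card)
        ≤ k * (I p₀).card := by
      calc (∑ p : Fin k, ∑ q ∈ Finset.univ.erase p, ((I p) ∩ (B q)).card)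
          ≤ ∑ p : Fin k, (I p).card := Finset.sum_le_sum (fun p _ => hAle p)
        _ ≤ ∑ _p : Fin k, (I p₀).card :=
            Finset.sum_le_sum (fun p _ => hp₀ p (Finset.mem_univ p))
        _ = k * (I p₀).card := by
            rw [Finset.sum_const, Finset.card_univ, Fintype.card_fin, smul_eq_mul]
    have hfin : k * (3 * (k - 1)) ≤ k * (2 * (I p₀).card) := by
      have e1 : k * (3 * (k - 1)) = k * ((k - 1) * 3) := by ring
      rw [e1]
      rw [hsplit, hswap] at hsum1
      calc k * ((k - 1) * 3)
          ≤ (∑ p : Fin k, ∑ q ∈ Finset.univ.erase p, ((I p) ∩ (B q)).card)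
            + ∑ p : Fin k, ∑ q ∈ Finset.univ.erase p, ((I p) ∩ (B q)).card := hsum1
        _ ≤ k * (I p₀).card + k * (I p₀).card := Nat.add_le_add hA2 hA2
        _ = k * (2 * (I p₀).card) := by ring
    exact Nat.le_of_mul_le_mul_left hfin hpos
end
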